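/- Let κ > 2 and α ∈ ℝ, α ≠ 0. Suppose b : [−1,1] → ℝ is continuous, even (b(−x) = b(x) for all x), twice continuously differentiable on (−1,1), not identically zero, and satisfies the nonlocal Legendre-type equation (1 − x²)b''(x) − 2x b'(x) − α b(x) = (κ/π)∫_{−1}^{1} b(y)/√(1 − y²) dy for all x ∈ (−1,1). Set λ := (κ/π)∫_{−1}^{1} b(y)/√(1 − y²) dy. Then either (i) b is a nonzero constant and α = −κ, or (ii) there exist a positive integer n and a real number B ≠ 0 such that α = −2n(2n+1) and b(x) = B·P_{2n}(x) − λ/α for all x ∈ [−1,1], where P_{2n} is the Legendre polynomial of degree 2n. In particular α ≤ −min(κ, 6) < −2, so every corresponding separated mode of the linearised flow decays exponentially. -/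

import Mathlib

open Real

/-- The Legendre polynomial `P_n`, defined by the Rodrigues formula
`P_n = 1/(2ⁿ n!) · dⁿ/dxⁿ (x² − 1)ⁿ`. -/
noncomputable def legendre (n : ℕ) : Polynomial ℝ :=
  ((1 : ℝ) / (2^n * n.factorial)) • (Polynomial.derivative^[n] ((Polynomial.X^2 - 1)^n))

open Set Filter intervalIntegral MeasureTheory Topology Polynomial

lemma aux1 (p : ℝ[X]) (j : ℕ) :
    derivative^[j+1] (X * p) = X * derivative^[j+1] p + ((j:ℝ[X])+1) * derivative^[j] p := by
  induction j with
  | zero => simp [derivative_mul]; ring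
  | succ j ih =>
    rw [Function.iterate_succ_apply' derivative (j+1) (X*p), ih]
    simp only [derivative_add, derivative_mul, derivative_X, derivative_natCast,
      derivative_one, derivative_ofNat, Function.iterate_succ_apply' derivative (j+1) p,
      Function.iterate_succ_apply' derivative j p]
    push_cast
    ring

lemma aux2 (p : ℝ[X]) (j : ℕ) :
    derivative^[j+2] ((X^2 - 1) * p) = (X^2-1) * derivative^[j+2] p
      + 2*((j:ℝ[X])+2)*X*derivative^[j+1] p + ((j:ℝ[X])+2)*((j:ℝ[X])+1) * derivative^[j] p := by
  induction j with
  | zero =>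
    have h2 : ∀ q : ℝ[X], derivative^[0+2] q = derivative (derivative q) := fun q => rfl
    have h1 : ∀ q : ℝ[X], derivative^[0+1] q = derivative q := fun q => rfl
    have h0 : ∀ q : ℝ[X], derivative^[0] q = q := fun q => rfl
    rw [h2, h2, h1, h0]
    simp only [derivative_mul, derivative_sub, derivative_one, derivative_X_pow,
      derivative_add, derivative_X, map_ofNat, Nat.cast_ofNat, derivative_ofNat, derivative_zero, map_one, Polynomial.C_1]
    push_cast
    simp only [Polynomial.C_1, Polynomial.C_eq_natCast, Nat.cast_one]
    ring
  | succ j ih =>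
    rw [Function.iterate_succ_apply' derivative (j+2) ((X^2-1)*p), ih]
    simp only [derivative_add, derivative_mul, derivative_sub, derivative_one,
      derivative_X_pow, derivative_X, derivative_natCast, derivative_ofNat, map_ofNat,
      Nat.cast_ofNat,
      Function.iterate_succ_apply' derivative (j+2) p,
      Function.iterate_succ_apply' derivative (j+1) p,
      Function.iterate_succ_apply' derivative j p]
    push_cast
    ring

lemma ode_g (l : ℕ) :
    (X^2-1) * derivative (derivative (derivative^[l] ((X^2-1)^l)))
      + 2*X*derivative (derivative^[l] ((X^2-1)^l))
      = ((l:ℝ[X])*((l:ℝ[X])+1)) * derivative^[l] ((X^2-1)^l) := by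
  cases l with
  | zero => simp
  | succ m =>
    set f : ℝ[X] := (X^2-1)^(m+1) with hf
    have hbase : (X^2-1) * derivative f = C ((2:ℝ)*(m+1)) * (X * f) := by
      rw [hf, derivative_pow]
      have : (X^2-1 : ℝ[X]) * ((X^2-1)^(m+1-1)) = (X^2-1)^(m+1) := by
        rw [Nat.add_sub_cancel, ← pow_succ']
      push_cast
      calc (X^2-1 : ℝ[X]) * (C ((m:ℝ)+1) * (X ^ 2 - 1) ^ (m + 1 - 1) * derivative (X^2-1))
          = (C ((m:ℝ)+1) * derivative (X^2-1)) * ((X^2-1) * (X^2-1)^(m+1-1)) := by ring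
        _ = C ((2:ℝ)*(m+1)) * (X * (X^2-1)^(m+1)) := by
            rw [this]
            simp only [derivative_sub, derivative_one, derivative_X_pow]
            simp only [map_add, map_mul, map_one, map_ofNat, Polynomial.C_eq_natCast,
              Polynomial.C_1]
            push_cast
            ring
    have E := congrArg (derivative^[m+2]) hbase
    rw [Polynomial.iterate_derivative_C_mul] at E
    rw [aux2 (derivative f) m] at E
    have h1 : derivative^[m+2] (derivative f) = derivative (derivative (derivative^[m+1] f)) := by
      rw [← Function.iterate_succ_apply derivative (m+2) f,
          Function.iterate_succ_apply' derivative (m+2) f,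
          Function.iterate_succ_apply' derivative (m+1) f]
    have h2 : derivative^[m+1] (derivative f) = derivative (derivative^[m+1] f) := by
      rw [← Function.iterate_succ_apply derivative (m+1) f,
          Function.iterate_succ_apply' derivative (m+1) f]
    have h3 : derivative^[m] (derivative f) = derivative^[m+1] f := by
      rw [← Function.iterate_succ_apply derivative m f]
    rw [h1, h2, h3, aux1 f (m+1)] at E
    have h4 : derivative^[m+1+1] f = derivative (derivative^[m+1] f) := by
      rw [Function.iterate_succ_apply' derivative (m+1) f]
    rw [h4] at E
    simp only [map_add, map_mul, map_one, map_ofNat, Polynomial.C_eq_natCast,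
      Polynomial.C_1] at E
    push_cast at E ⊢
    linear_combination E

lemma legendre_ode (l : ℕ) :
    (X^2-1) * derivative (derivative (legendre l)) + 2*X*derivative (legendre l)
      = ((l:ℝ[X])*((l:ℝ[X])+1)) * legendre l := by
  unfold legendre
  rw [derivative_smul, derivative_smul]
  simp only [Polynomial.smul_eq_C_mul]
  linear_combination (C ((1:ℝ) / (2^l * l.factorial))) * ode_g l

lemma legendre_ode_eval (l : ℕ) (x : ℝ) :
    (1 - x^2) * (derivative (derivative (legendre l))).eval x
      - 2*x*(derivative (legendre l)).eval x + ((l:ℝ)*((l:ℝ)+1)) * (legendre l).eval x = 0 := by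
  have h := congrArg (Polynomial.eval x) (legendre_ode l)
  simp only [eval_mul, eval_add, eval_sub, eval_pow, eval_X, eval_one, eval_ofNat,
    eval_natCast] at h
  linear_combination -h

lemma monic_pow_l (l : ℕ) : ((X^2-1 : ℝ[X])^l).Monic := by
  have h : (X^2 - 1 : ℝ[X]) = X^2 - Polynomial.C 1 := by simp
  exact (h ▸ (monic_X_pow_sub_C (1:ℝ) two_ne_zero)).pow l

lemma natDegree_pow_l (l : ℕ) : ((X^2-1 : ℝ[X])^l).natDegree = 2*l := by
  have h : (X^2 - 1 : ℝ[X]) = X^2 - Polynomial.C 1 := by simp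
  have h2 : (X^2 - C (1:ℝ)).Monic := monic_X_pow_sub_C (1:ℝ) two_ne_zero
  rw [h, h2.natDegree_pow, natDegree_X_pow_sub_C]
  ring

lemma legendre_coeff (l : ℕ) : (legendre l).coeff l
    = ((1:ℝ) / (2^l * l.factorial)) * (2*l).descFactorial l := by
  unfold legendre
  rw [Polynomial.coeff_smul, Polynomial.coeff_iterate_derivative]
  have h2 : l + l = 2*l := by ring
  rw [h2]
  have h3 : ((X^2-1 : ℝ[X])^l).coeff (2*l) = 1 := by
    have := (monic_pow_l l).leadingCoeff
    rwa [Polynomial.leadingCoeff, natDegree_pow_l] at this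
  rw [h3]
  simp [smul_eq_mul]

lemma legendre_coeff_ne (l : ℕ) : (legendre l).coeff l ≠ 0 := by
  rw [legendre_coeff]
  have h1 : (0:ℝ) < 2^l * l.factorial := by positivity
  have h2 : (2*l).descFactorial l ≠ 0 := by
    rw [Ne, Nat.descFactorial_eq_zero_iff_lt]; omega
  have h2' : (0:ℝ) < ((2*l).descFactorial l : ℝ) := by
    exact_mod_cast Nat.pos_of_ne_zero h2
  positivity

lemma legendre_ne_zero (l : ℕ) : legendre l ≠ 0 := fun h => legendre_coeff_ne l (by simp [h])

lemma legendre_natDegree (l : ℕ) : (legendre l).natDegree = l := by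
  refine le_antisymm ?_ (Polynomial.le_natDegree_of_ne_zero (legendre_coeff_ne l))
  unfold legendre
  refine le_trans (Polynomial.natDegree_smul_le _ _) (le_trans (Polynomial.natDegree_iterate_derivative _ _) ?_)
  rw [natDegree_pow_l]
  omega


lemma no_pos_limit (u u' : ℝ → ℝ)
    (hu : ContinuousOn u (Set.Icc (-1) 1))
    (hd1 : ∀ x ∈ Set.Ioo (-1:ℝ) 1, HasDerivAt u (u' x) x)
    (hu' : ContinuousOn u' (Set.Ioo (-1) 1))
    (L : ℝ) (hL : 0 < L)
    (hw : Tendsto (fun x => (1 - x^2) * u' x) (nhdsWithin 1 (Set.Iio 1)) (nhds L)) : False := by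
  obtain ⟨M, hM⟩ := (isCompact_Icc : IsCompact (Set.Icc (-1:ℝ) 1)).exists_bound_of_continuousOn hu
  have hM0 : 0 ≤ M := le_trans (norm_nonneg _) (hM 0 (by norm_num))
  have hev : ∀ᶠ x in nhdsWithin 1 (Set.Iio 1), L/2 < (1 - x^2) * u' x :=
    hw.eventually (eventually_gt_nhds (by linarith))
  rw [eventually_nhdsWithin_iff] at hev
  rw [Metric.eventually_nhds_iff] at hev
  obtain ⟨ε, hε, hball⟩ := hev
  set c : ℝ := max (1 - ε/2) 0 with hc
  have hc0 : 0 ≤ c := le_max_right _ _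
  have hc1 : c < 1 := by
    rw [hc, max_lt_iff]; constructor <;> [linarith; norm_num]
  have hcmem : c ∈ Set.Ioo (-1:ℝ) 1 := ⟨by linarith, hc1⟩
  have hwlow : ∀ t, c ≤ t → t < 1 → L/2 < (1 - t^2) * u' t := by
    intro t h1 h2
    apply hball ?_ h2
    rw [Real.dist_eq, abs_sub_lt_iff]
    have : 1 - ε/2 ≤ c := le_max_left _ _
    constructor <;> linarith
  set E : ℝ := Real.exp (-(8*M/L + 1)) with hE
  have hE0 : 0 < E := Real.exp_pos _
  have hE1 : E < 1 := by
    rw [hE, Real.exp_lt_one_iff]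
    have : 0 ≤ 8*M/L := by positivity
    linarith
  set y : ℝ := 1 - (1-c)*E with hy
  have hyc : c < y := by
    have h1c : 0 < 1 - c := by linarith
    have : (1-c)*E < (1-c)*1 := by
      apply mul_lt_mul_of_pos_left hE1 h1c
    rw [hy]; nlinarith
  have hy1 : y < 1 := by
    have : 0 < (1-c)*E := mul_pos (by linarith) hE0
    rw [hy]; linarith
  have hsub : Set.Icc c y ⊆ Set.Ioo (-1:ℝ) 1 := fun t ht =>
    ⟨by linarith [ht.1], lt_of_le_of_lt ht.2 hy1⟩
  have huIcc : Set.uIcc c y = Set.Icc c y := Set.uIcc_of_le hyc.le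
  -- lower bound on u' on [c,y]
  have hlow : ∀ t ∈ Set.Icc c y, (L/4) * (1/(1-t)) ≤ u' t := by
    intro t ht
    have ht1 : t < 1 := lt_of_le_of_lt ht.2 hy1
    have h1t : 0 < 1 - t := by linarith
    have hwt := hwlow t ht.1 ht1
    have ht0 : 0 ≤ t := le_trans hc0 ht.1
    have h1t2 : 0 < 1 - t^2 := by nlinarith
    have hu'pos : 0 < u' t := by nlinarith
    have key : L/4 ≤ u' t * (1 - t) := by nlinarith
    calc (L/4) * (1/(1-t)) = (L/4) / (1-t) := by ring
      _ ≤ u' t := by rw [div_le_iff₀ h1t]; linarith [key]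
  -- FTC for u on [c,y]
  have hint_u' : IntervalIntegrable u' volume c y :=
    ContinuousOn.intervalIntegrable (by rw [huIcc]; exact hu'.mono hsub)
  have hftc : ∫ t in c..y, u' t = u y - u c := by
    apply integral_eq_sub_of_hasDerivAt
    · intro x hx
      exact hd1 x (hsub (huIcc ▸ hx))
    · exact hint_u'
  -- comparison integral
  have hcont_g : ContinuousOn (fun t => (L/4) * (1/(1-t))) (Set.Icc c y) := by
    apply ContinuousOn.mul continuousOn_const
    apply ContinuousOn.div continuousOn_const
    · exact (continuousOn_const.sub continuousOn_id)
    · intro t ht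
      have : t < 1 := lt_of_le_of_lt ht.2 hy1
      intro h; rw [sub_eq_zero] at h; linarith
  have hint_g : IntervalIntegrable (fun t => (L/4) * (1/(1-t))) volume c y :=
    ContinuousOn.intervalIntegrable (by rw [huIcc]; exact hcont_g)
  have hftc_g : ∫ t in c..y, (L/4) * (1/(1-t))
      = (-(L/4) * Real.log (1-y)) - (-(L/4) * Real.log (1-c)) := by
    apply integral_eq_sub_of_hasDerivAt (f := fun t => -(L/4) * Real.log (1-t))
    · intro x hx
      rw [huIcc] at hx
      have hx1 : x < 1 := lt_of_le_of_lt hx.2 hy1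
      have h1x : (1:ℝ) - x ≠ 0 := by intro h; rw [sub_eq_zero] at h; linarith
      have hlog : HasDerivAt (fun t : ℝ => Real.log (1-t)) ((-1)/(1-x)) x := by
        have hbase : HasDerivAt (fun t : ℝ => 1 - t) (-1) x := by
          simpa using (hasDerivAt_id x).const_sub (1:ℝ)
        exact hbase.log h1x
      have := hlog.const_mul (-(L/4))
      convert this using 1
      · rfl
      ring
    · exact hint_g
  have hmono := intervalIntegral.integral_mono_on hyc.le hint_g hint_u' hlow
  rw [hftc, hftc_g] at hmono
  have hlogy : Real.log (1-y) = Real.log (1-c) - (8*M/L + 1) := by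
    rw [hy]
    have h1c : (1:ℝ) - c ≠ 0 := by intro h; rw [sub_eq_zero] at h; linarith
    simp only [show (1:ℝ) - (1 - (1-c)*E) = (1-c)*E by ring]
    rw [Real.log_mul h1c (ne_of_gt hE0), hE, Real.log_exp]
    ring
  have hMy := hM y (Set.mem_Icc.mpr ⟨by linarith, hy1.le⟩)
  have hMc := hM c (Set.mem_Icc.mpr ⟨by linarith, hc1.le⟩)
  rw [Real.norm_eq_abs, abs_le] at hMy hMc
  have hLdiv : L/4 * (8*M/L + 1) = 2*M + L/4 := by field_simp; ring
  nlinarith [hmono, hlogy]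

lemma w_tendsto_right (u u' u'' g : ℝ → ℝ)
    (hu : ContinuousOn u (Set.Icc (-1) 1))
    (hd1 : ∀ x ∈ Set.Ioo (-1:ℝ) 1, HasDerivAt u (u' x) x)
    (hd2 : ∀ x ∈ Set.Ioo (-1:ℝ) 1, HasDerivAt u' (u'' x) x)
    (hg : ContinuousOn g (Set.Icc (-1) 1))
    (hode : ∀ x ∈ Set.Ioo (-1:ℝ) 1, (1 - x^2) * u'' x - 2*x*u' x = g x) :
    Tendsto (fun x => (1 - x^2) * u' x) (nhdsWithin 1 (Set.Iio 1)) (nhds 0) := by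
  set w : ℝ → ℝ := fun x => (1 - x^2) * u' x with hwdef
  have hu'cont : ContinuousOn u' (Set.Ioo (-1:ℝ) 1) := fun x hx =>
    (hd2 x hx).continuousAt.continuousWithinAt
  have hdw : ∀ x ∈ Set.Ioo (-1:ℝ) 1, HasDerivAt w (g x) x := by
    intro x hx
    have h1 : HasDerivAt (fun t : ℝ => 1 - t^2) (-(2*x)) x := by
      simpa using ((hasDerivAt_pow 2 x).const_sub (1:ℝ))
    have := h1.mul (hd2 x hx)
    rw [show -(2*x) * u' x + (1 - x^2) * u'' x = (1 - x^2) * u'' x - 2*x*u' x by ring,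
      hode x hx] at this
    exact this
  have h0mem : (0:ℝ) ∈ Set.Ioo (-1:ℝ) 1 := by norm_num
  have hgint01 : IntegrableOn g (Set.uIcc 0 1) := by
    rw [Set.uIcc_of_le zero_le_one]
    exact (hg.mono (fun t ht => ⟨by linarith [ht.1], ht.2⟩)).integrableOn_compact isCompact_Icc
  have hprim : ContinuousOn (fun x => ∫ t in (0:ℝ)..x, g t) (Set.uIcc 0 1) :=
    intervalIntegral.continuousOn_primitive_interval hgint01
  set L : ℝ := w 0 + ∫ t in (0:ℝ)..1, g t with hLdef
  have heqw : ∀ x ∈ Set.Ioo (0:ℝ) 1, w x = w 0 + ∫ t in (0:ℝ)..x, g t := by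
    intro x hx
    have hsub : Set.uIcc 0 x ⊆ Set.Ioo (-1:ℝ) 1 :=
      Set.OrdConnected.uIcc_subset Set.ordConnected_Ioo h0mem ⟨by linarith [hx.1], hx.2⟩
    have : ∫ t in (0:ℝ)..x, g t = w x - w 0 := by
      apply intervalIntegral.integral_eq_sub_of_hasDerivAt
      · exact fun t ht => hdw t (hsub ht)
      · exact ContinuousOn.intervalIntegrable (hg.mono (fun t ht => Set.mem_Icc.mpr
          ⟨by have := (hsub ht).1; linarith, by have := (hsub ht).2; linarith⟩))
    linarith [this]
  have hten : Tendsto w (nhdsWithin 1 (Set.Iio 1)) (nhds L) := by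
    rw [← nhdsWithin_Ioo_eq_nhdsLT (zero_lt_one : (0:ℝ) < 1)]
    have hten2 : Tendsto (fun x => w 0 + ∫ t in (0:ℝ)..x, g t)
        (nhdsWithin 1 (Set.Ioo 0 1)) (nhds L) := by
      have hcw : ContinuousWithinAt (fun x => w 0 + ∫ t in (0:ℝ)..x, g t) (Set.uIcc 0 1) 1 := by
        apply ContinuousWithinAt.add continuousWithinAt_const
        exact hprim 1 (by rw [Set.uIcc_of_le zero_le_one]; exact Set.right_mem_Icc.mpr zero_le_one)
      have := hcw.tendsto
      apply this.mono_left
      apply nhdsWithin_mono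
      rw [Set.uIcc_of_le zero_le_one]
      exact Set.Ioo_subset_Icc_self
    apply hten2.congr'
    filter_upwards [self_mem_nhdsWithin] with x hx
    exact (heqw x hx).symm
  have hL0 : L = 0 := by
    rcases lt_trichotomy L 0 with h | h | h
    · exfalso
      apply no_pos_limit (fun x => -u x) (fun x => -u' x) hu.neg
        (fun x hx => (hd1 x hx).neg) hu'cont.neg (-L) (by linarith)
      have := hten.neg
      rw [hwdef] at this
      convert this using 2 with x
      ring
    · exact h
    · exact absurd (no_pos_limit u u' hu hd1 hu'cont L h hten) not_false
  rwa [hL0] at hten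

lemma w_tendsto_left (u u' u'' g : ℝ → ℝ)
    (hu : ContinuousOn u (Set.Icc (-1) 1))
    (hd1 : ∀ x ∈ Set.Ioo (-1:ℝ) 1, HasDerivAt u (u' x) x)
    (hd2 : ∀ x ∈ Set.Ioo (-1:ℝ) 1, HasDerivAt u' (u'' x) x)
    (hg : ContinuousOn g (Set.Icc (-1) 1))
    (hode : ∀ x ∈ Set.Ioo (-1:ℝ) 1, (1 - x^2) * u'' x - 2*x*u' x = g x) :
    Tendsto (fun x => (1 - x^2) * u' x) (nhdsWithin (-1) (Set.Ioi (-1))) (nhds 0) := by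
  have hmaps : ∀ x ∈ Set.Icc (-1:ℝ) 1, -x ∈ Set.Icc (-1:ℝ) 1 := by
    intro x hx; exact ⟨by linarith [hx.2], by linarith [hx.1]⟩
  have hmapso : ∀ x ∈ Set.Ioo (-1:ℝ) 1, -x ∈ Set.Ioo (-1:ℝ) 1 := by
    intro x hx; exact ⟨by linarith [hx.2], by linarith [hx.1]⟩
  have hR := w_tendsto_right (fun x => u (-x)) (fun x => -u' (-x)) (fun x => u'' (-x))
      (fun x => g (-x))
      (hu.comp continuous_neg.continuousOn hmaps)
      (fun x hx => by
        have h := (hd1 (-x) (hmapso x hx)).comp x ((hasDerivAt_id x).neg)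
        simpa [Function.comp_def] using h)
      (fun x hx => by
        have h := (hd2 (-x) (hmapso x hx)).comp x ((hasDerivAt_id x).neg)
        simpa [Function.comp_def, Pi.neg_def] using h.neg)
      (hg.comp continuous_neg.continuousOn hmaps)
      (fun x hx => by
        have h := hode (-x) (hmapso x hx)
        ring_nf at h ⊢
        linarith [h])
  have hneg : Tendsto (fun y : ℝ => -y) (nhdsWithin (-1) (Set.Ioi (-1)))
      (nhdsWithin 1 (Set.Iio 1)) := by
    rw [tendsto_nhdsWithin_iff]
    constructor
    · have := (continuous_neg.tendsto (-1:ℝ)).mono_left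
        (nhdsWithin_le_nhds (s := Set.Ioi (-1:ℝ)))
      simpa using this
    · filter_upwards [self_mem_nhdsWithin] with y hy
      simp only [Set.mem_Iio]
      simp only [Set.mem_Ioi] at hy
      linarith
  have hcomp := hR.comp hneg
  have := hcomp.neg
  rw [neg_zero] at this
  apply this.congr
  intro y
  simp only [Function.comp_apply, neg_neg]
  ring

lemma moment_rel (u u' u'' : ℝ → ℝ) (μ : ℝ)
    (hu : ContinuousOn u (Set.Icc (-1) 1))
    (hd1 : ∀ x ∈ Set.Ioo (-1:ℝ) 1, HasDerivAt u (u' x) x)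
    (hd2 : ∀ x ∈ Set.Ioo (-1:ℝ) 1, HasDerivAt u' (u'' x) x)
    (hode : ∀ x ∈ Set.Ioo (-1:ℝ) 1, (1 - x^2) * u'' x - 2*x*u' x + μ * u x = 0)
    (q : Polynomial ℝ) :
    ∫ x in (-1:ℝ)..1, u x * ((1 - x^2) * (Polynomial.derivative (Polynomial.derivative q)).eval x
        - 2*x*(Polynomial.derivative q).eval x + μ * q.eval x) = 0 := by
  have hm11 : (-1:ℝ) < 1 := by norm_num
  set F : ℝ → ℝ := fun x => u x * ((1 - x^2) * (Polynomial.derivative (Polynomial.derivative q)).eval x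
        - 2*x*(Polynomial.derivative q).eval x + μ * q.eval x) with hFdef
  set W : ℝ → ℝ := fun x => (1 - x^2) * (u x * (Polynomial.derivative q).eval x - u' x * q.eval x)
    with hWdef
  have hgode : ∀ x ∈ Set.Ioo (-1:ℝ) 1, (1 - x^2) * u'' x - 2*x*u' x = -(μ * u x) := by
    intro x hx; linarith [hode x hx]
  have hgcont : ContinuousOn (fun x => -(μ * u x)) (Set.Icc (-1:ℝ) 1) :=
    (hu.const_smul μ).neg
  have hwr := w_tendsto_right u u' u'' _ hu hd1 hd2 hgcont hgode
  have hwl := w_tendsto_left u u' u'' _ hu hd1 hd2 hgcont hgode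
  have hcontF : ContinuousOn F (Set.Icc (-1:ℝ) 1) := by
    apply hu.mul
    exact ((((continuous_const.sub (continuous_pow 2)).mul (Polynomial.continuous _)).sub
      ((continuous_const.mul continuous_id).mul (Polynomial.continuous _))).add
      (continuous_const.mul (Polynomial.continuous _))).continuousOn
  have hFint : IntegrableOn F (Set.uIcc (-1:ℝ) 1) := by
    rw [Set.uIcc_of_le hm11.le]
    exact hcontF.integrableOn_compact isCompact_Icc
  have hdW : ∀ x ∈ Set.Ioo (-1:ℝ) 1, HasDerivAt W (F x) x := by
    intro x hx
    have h1 : HasDerivAt (fun t : ℝ => 1 - t^2) (-(2*x)) x := by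
      simpa using ((hasDerivAt_pow 2 x).const_sub (1:ℝ))
    have h2 := ((hd1 x hx).mul (Polynomial.hasDerivAt (Polynomial.derivative q) x)).sub
      ((hd2 x hx).mul (Polynomial.hasDerivAt q x))
    have h3 := h1.mul h2
    convert h3 using 1
    · rfl
    case e'_5 => rfl
    case e'_8 => rfl
    have hx' := hode x hx
    show u x * ((1 - x^2) * (Polynomial.derivative (Polynomial.derivative q)).eval x
          - 2*x*(Polynomial.derivative q).eval x + μ * q.eval x)
        = -(2*x) * (u x * (Polynomial.derivative q).eval x - u' x * q.eval x)
          + (1 - x^2) * (u' x * (Polynomial.derivative q).eval x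
            + u x * (Polynomial.derivative (Polynomial.derivative q)).eval x
            - (u'' x * q.eval x + u' x * (Polynomial.derivative q).eval x))
    linear_combination (Polynomial.eval x q) * hode x hx
  have hsubIoo : ∀ s ∈ Set.Ioo (-1:ℝ) 1, ∀ r ∈ Set.Ioo (-1:ℝ) 1,
      Set.uIcc s r ⊆ Set.Ioo (-1:ℝ) 1 := fun s hs r hr =>
    Set.OrdConnected.uIcc_subset Set.ordConnected_Ioo hs hr
  have hFint' : ∀ s r : ℝ, s ∈ Set.Icc (-1:ℝ) 1 → r ∈ Set.Icc (-1:ℝ) 1 →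
      IntervalIntegrable F volume s r := by
    intro s r hs hr
    apply ContinuousOn.intervalIntegrable
    apply hcontF.mono
    exact Set.OrdConnected.uIcc_subset Set.ordConnected_Icc hs hr
  set G : ℝ → ℝ := fun r => ∫ x in (-1:ℝ)..r, F x with hGdef
  have hGcont : ContinuousOn G (Set.Icc (-1:ℝ) 1) := by
    have := intervalIntegral.continuousOn_primitive_interval hFint
    rwa [Set.uIcc_of_le hm11.le] at this
  have hconst : ∀ s ∈ Set.Ioo (-1:ℝ) 1, ∀ r ∈ Set.Ioo (-1:ℝ) 1, G r - W r = G s - W s := by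
    have key : ∀ s ∈ Set.Ioo (-1:ℝ) 1, ∀ r ∈ Set.Ioo (-1:ℝ) 1, s ≤ r →
        G r - W r = G s - W s := by
      intro s hs r hr hsr
      have h1 : ∫ x in s..r, F x = W r - W s := by
        apply intervalIntegral.integral_eq_sub_of_hasDerivAt
        · exact fun t ht => hdW t (hsubIoo s hs r hr ht)
        · exact hFint' s r (Set.Ioo_subset_Icc_self hs) (Set.Ioo_subset_Icc_self hr)
      have h2 : G r - G s = ∫ x in s..r, F x := by
        rw [hGdef]
        simp only
        rw [← intervalIntegral.integral_interval_sub_left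
          (hFint' (-1) r (Set.left_mem_Icc.mpr hm11.le) (Set.Ioo_subset_Icc_self hr))
          (hFint' (-1) s (Set.left_mem_Icc.mpr hm11.le) (Set.Ioo_subset_Icc_self hs))]
      linarith [h1, h2]
    intro s hs r hr
    rcases le_total s r with h | h
    · exact key s hs r hr h
    · exact (key r hr s hs h).symm
  have h0mem : (0:ℝ) ∈ Set.Ioo (-1:ℝ) 1 := by norm_num
  set c₀ : ℝ := G 0 - W 0 with hc₀
  -- limits at 1
  have hIooIio : nhdsWithin (1:ℝ) (Set.Ioo (-1:ℝ) 1) = nhdsWithin 1 (Set.Iio 1) :=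
    nhdsWithin_Ioo_eq_nhdsLT hm11
  have hIooIoi : nhdsWithin (-1:ℝ) (Set.Ioo (-1:ℝ) 1) = nhdsWithin (-1) (Set.Ioi (-1)) :=
    nhdsWithin_Ioo_eq_nhdsGT hm11
  have hWr : Tendsto W (nhdsWithin 1 (Set.Iio 1)) (nhds 0) := by
    rw [← hIooIio]
    have hu1 : Tendsto u (nhdsWithin 1 (Set.Ioo (-1:ℝ) 1)) (nhds (u 1)) :=
      ((hu 1 (Set.right_mem_Icc.mpr hm11.le)).tendsto).mono_left
        (nhdsWithin_mono _ Set.Ioo_subset_Icc_self)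
    have hq' : Tendsto (fun x => (1 - x^2) * (Polynomial.derivative q).eval x)
        (nhdsWithin 1 (Set.Ioo (-1:ℝ) 1)) (nhds 0) := by
      have hcont : Continuous (fun x : ℝ => (1 - x^2) * (Polynomial.derivative q).eval x) :=
        (continuous_const.sub (continuous_pow 2)).mul (Polynomial.continuous _)
      have := (hcont.tendsto 1).mono_left (nhdsWithin_le_nhds (s := Set.Ioo (-1:ℝ) 1))
      simpa using this
    have hqe : Tendsto (fun x => Polynomial.eval x q)
        (nhdsWithin 1 (Set.Ioo (-1:ℝ) 1)) (nhds (Polynomial.eval 1 q)) :=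
      ((Polynomial.continuous q).tendsto 1).mono_left (nhdsWithin_le_nhds)
    have hw1 : Tendsto (fun x => (1 - x^2) * u' x) (nhdsWithin 1 (Set.Ioo (-1:ℝ) 1)) (nhds 0) :=
      hwr.mono_left (le_of_eq hIooIio)
    have hT1 : Tendsto (fun x => u x * ((1 - x^2) * (Polynomial.derivative q).eval x))
        (nhdsWithin 1 (Set.Ioo (-1:ℝ) 1)) (nhds 0) := by
      have := hu1.mul hq'
      simpa using this
    have hT2 : Tendsto (fun x => Polynomial.eval x q * ((1 - x^2) * u' x))
        (nhdsWithin 1 (Set.Ioo (-1:ℝ) 1)) (nhds 0) := by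
      have := hqe.mul hw1
      simpa using this
    have := hT1.sub hT2
    rw [sub_zero] at this
    apply this.congr
    intro x
    simp only [hWdef]
    ring
  have hWl : Tendsto W (nhdsWithin (-1:ℝ) (Set.Ioi (-1))) (nhds 0) := by
    rw [← hIooIoi]
    have hu1 : Tendsto u (nhdsWithin (-1:ℝ) (Set.Ioo (-1:ℝ) 1)) (nhds (u (-1))) :=
      ((hu (-1) (Set.left_mem_Icc.mpr hm11.le)).tendsto).mono_left
        (nhdsWithin_mono _ Set.Ioo_subset_Icc_self)
    have hq' : Tendsto (fun x => (1 - x^2) * (Polynomial.derivative q).eval x)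
        (nhdsWithin (-1:ℝ) (Set.Ioo (-1:ℝ) 1)) (nhds 0) := by
      have hcont : Continuous (fun x : ℝ => (1 - x^2) * (Polynomial.derivative q).eval x) :=
        (continuous_const.sub (continuous_pow 2)).mul (Polynomial.continuous _)
      have := (hcont.tendsto (-1)).mono_left (nhdsWithin_le_nhds (s := Set.Ioo (-1:ℝ) 1))
      simpa using this
    have hqe : Tendsto (fun x => Polynomial.eval x q)
        (nhdsWithin (-1:ℝ) (Set.Ioo (-1:ℝ) 1)) (nhds (Polynomial.eval (-1) q)) :=
      ((Polynomial.continuous q).tendsto (-1)).mono_left (nhdsWithin_le_nhds)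
    have hw1 : Tendsto (fun x => (1 - x^2) * u' x)
        (nhdsWithin (-1:ℝ) (Set.Ioo (-1:ℝ) 1)) (nhds 0) :=
      hwl.mono_left (le_of_eq hIooIoi)
    have hT1 : Tendsto (fun x => u x * ((1 - x^2) * (Polynomial.derivative q).eval x))
        (nhdsWithin (-1:ℝ) (Set.Ioo (-1:ℝ) 1)) (nhds 0) := by
      have := hu1.mul hq'
      simpa using this
    have hT2 : Tendsto (fun x => Polynomial.eval x q * ((1 - x^2) * u' x))
        (nhdsWithin (-1:ℝ) (Set.Ioo (-1:ℝ) 1)) (nhds 0) := by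
      have := hqe.mul hw1
      simpa using this
    have := hT1.sub hT2
    rw [sub_zero] at this
    apply this.congr
    intro x
    simp only [hWdef]
    ring
  have hGr : Tendsto G (nhdsWithin 1 (Set.Iio 1)) (nhds (G 1)) := by
    rw [← hIooIio]
    exact ((hGcont 1 (Set.right_mem_Icc.mpr hm11.le)).tendsto).mono_left
      (nhdsWithin_mono _ Set.Ioo_subset_Icc_self)
  have hGl : Tendsto G (nhdsWithin (-1:ℝ) (Set.Ioi (-1))) (nhds (G (-1))) := by
    rw [← hIooIoi]
    exact ((hGcont (-1) (Set.left_mem_Icc.mpr hm11.le)).tendsto).mono_left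
      (nhdsWithin_mono _ Set.Ioo_subset_Icc_self)
  have hEvR : (fun r => G r - W r) =ᶠ[nhdsWithin 1 (Set.Iio 1)] (fun _ => c₀) := by
    rw [← hIooIio]
    filter_upwards [self_mem_nhdsWithin] with r hr
    exact hconst 0 h0mem r hr
  have hEvL : (fun r => G r - W r) =ᶠ[nhdsWithin (-1:ℝ) (Set.Ioi (-1))] (fun _ => c₀) := by
    rw [← hIooIoi]
    filter_upwards [self_mem_nhdsWithin] with r hr
    exact hconst 0 h0mem r hr
  have hR : G 1 - 0 = c₀ := by
    apply tendsto_nhds_unique (hGr.sub hWr)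
    exact Tendsto.congr' hEvR.symm tendsto_const_nhds
  have hL : G (-1) - 0 = c₀ := by
    apply tendsto_nhds_unique (hGl.sub hWl)
    exact Tendsto.congr' hEvL.symm tendsto_const_nhds
  have hGm1 : G (-1) = 0 := by
    rw [hGdef]; simp
  have : G 1 = 0 := by rw [sub_zero] at hR hL; rw [hR, ← hL, hGm1]
  rw [hGdef] at this
  exact this


lemma sq_integral_pos (v : ℝ → ℝ) (hv : ContinuousOn v (Set.Icc (-1) 1))
    (x₀ : ℝ) (hx₀ : x₀ ∈ Set.Icc (-1:ℝ) 1) (hvx : v x₀ ≠ 0) :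
    0 < ∫ x in (-1:ℝ)..1, (v x)^2 := by
  have hm11 : (-1:ℝ) < 1 := by norm_num
  set ε : ℝ := |v x₀|/2 with hε
  have hε0 : 0 < ε := by
    have := abs_pos.mpr hvx; rw [hε]; linarith
  have hcw := hv x₀ hx₀
  rw [Metric.continuousWithinAt_iff] at hcw
  obtain ⟨δ, hδ0, hδ⟩ := hcw ε hε0
  set s : ℝ := max (-1) (x₀ - δ/2) with hs
  set r : ℝ := min 1 (x₀ + δ/2) with hr
  have hs1 : -1 ≤ s := le_max_left _ _
  have hr1 : r ≤ 1 := min_le_left _ _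
  have hsx : s ≤ x₀ := max_le (by linarith [hx₀.1]) (by linarith)
  have hxr : x₀ ≤ r := le_min (hx₀.2) (by linarith)
  have hsr : s < r := by
    rcases lt_or_eq_of_le hx₀.2 with h | h
    · have : x₀ < r := lt_min h (by linarith)
      linarith
    · have hs' : s < 1 := max_lt hm11 (by linarith)
      have hr' : r = 1 := by
        rw [hr, h]; exact min_eq_left (by linarith)
      rw [hr']; exact hs'
  have hIccsub : Set.Icc s r ⊆ Set.Icc (-1:ℝ) 1 := fun t ht =>
    ⟨le_trans hs1 ht.1, le_trans ht.2 hr1⟩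
  have hlow : ∀ t ∈ Set.Icc s r, ε^2 ≤ (v t)^2 := by
    intro t ht
    have htI : t ∈ Set.Icc (-1:ℝ) 1 := hIccsub ht
    have hdist : dist t x₀ < δ := by
      rw [Real.dist_eq, abs_sub_lt_iff]
      have h1 : x₀ - δ/2 ≤ s := le_max_right _ _
      have h2 : r ≤ x₀ + δ/2 := min_le_right _ _
      constructor <;> [linarith [ht.2]; linarith [ht.1]]
    have := hδ htI hdist
    rw [Real.dist_eq] at this
    have habs : ε ≤ |v t| := by
      have h1 := abs_sub_abs_le_abs_sub (v x₀) (v t)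
      rw [abs_sub_comm (v x₀) (v t)] at h1
      rw [hε] at *
      linarith [h1, this]
    calc ε^2 ≤ |v t|^2 := by nlinarith [abs_nonneg (v t)]
      _ = (v t)^2 := sq_abs _
  have hvint : ∀ a b : ℝ, a ∈ Set.Icc (-1:ℝ) 1 → b ∈ Set.Icc (-1:ℝ) 1 →
      IntervalIntegrable (fun x => (v x)^2) volume a b := by
    intro a b ha hb
    apply ContinuousOn.intervalIntegrable
    apply (hv.pow 2).mono
    exact Set.OrdConnected.uIcc_subset Set.ordConnected_Icc ha hb
  have hsI : s ∈ Set.Icc (-1:ℝ) 1 := ⟨hs1, by linarith⟩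
  have hrI : r ∈ Set.Icc (-1:ℝ) 1 := ⟨by linarith, hr1⟩
  have hmid : 0 < ∫ x in s..r, (v x)^2 := by
    have h1 : IntervalIntegrable (fun _ : ℝ => ε^2) volume s r := intervalIntegrable_const
    have h2 := intervalIntegral.integral_mono_on hsr.le h1 (hvint s r hsI hrI) hlow
    rw [intervalIntegral.integral_const] at h2
    have hrs : 0 < r - s := sub_pos.mpr hsr
    have : 0 < (r - s) • ε^2 := by
      rw [smul_eq_mul]; positivity
    linarith
  have hn1 : 0 ≤ ∫ x in (-1:ℝ)..s, (v x)^2 :=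
    intervalIntegral.integral_nonneg hs1 (fun t _ => sq_nonneg _)
  have hn2 : 0 ≤ ∫ x in r..1, (v x)^2 :=
    intervalIntegral.integral_nonneg hr1 (fun t _ => sq_nonneg _)
  have hsplit1 : (∫ x in (-1:ℝ)..s, (v x)^2) + ∫ x in s..r, (v x)^2
      = ∫ x in (-1:ℝ)..r, (v x)^2 :=
    intervalIntegral.integral_add_adjacent_intervals
      (hvint (-1) s (Set.left_mem_Icc.mpr hm11.le) hsI)
      (hvint s r hsI hrI)
  have hsplit2 : (∫ x in (-1:ℝ)..r, (v x)^2) + ∫ x in r..1, (v x)^2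
      = ∫ x in (-1:ℝ)..1, (v x)^2 :=
    intervalIntegral.integral_add_adjacent_intervals
      (hvint (-1) r (Set.left_mem_Icc.mpr hm11.le) hrI)
      (hvint r 1 hrI (Set.right_mem_Icc.mpr hm11.le))
  linarith

lemma integral_mul_poly (v : ℝ → ℝ) (hv : ContinuousOn v (Set.Icc (-1) 1)) (Q : ℝ[X]) :
    ∫ x in (-1:ℝ)..1, v x * Q.eval x
      = ∑ k ∈ Finset.range (Q.natDegree + 1), Q.coeff k * ∫ x in (-1:ℝ)..1, v x * x^k := by
  have hm11 : (-1:ℝ) < 1 := by norm_num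
  have hint : ∀ k : ℕ, IntervalIntegrable (fun x => Q.coeff k * (v x * x^k)) volume (-1) 1 := by
    intro k
    apply ContinuousOn.intervalIntegrable
    rw [Set.uIcc_of_le hm11.le]
    exact (continuousOn_const.mul (hv.mul (continuousOn_pow k)))
  calc ∫ x in (-1:ℝ)..1, v x * Q.eval x
      = ∫ x in (-1:ℝ)..1, ∑ k ∈ Finset.range (Q.natDegree + 1), Q.coeff k * (v x * x^k) := by
        apply intervalIntegral.integral_congr
        intro x _
        show v x * Q.eval x = ∑ k ∈ Finset.range (Q.natDegree + 1), Q.coeff k * (v x * x^k)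
        rw [Polynomial.eval_eq_sum_range, Finset.mul_sum]
        apply Finset.sum_congr rfl
        intro k _
        ring
    _ = ∑ k ∈ Finset.range (Q.natDegree + 1), ∫ x in (-1:ℝ)..1, Q.coeff k * (v x * x^k) :=
        intervalIntegral.integral_finset_sum (fun k _ => hint k)
    _ = ∑ k ∈ Finset.range (Q.natDegree + 1), Q.coeff k * ∫ x in (-1:ℝ)..1, v x * x^k := by
        apply Finset.sum_congr rfl
        intro k _
        rw [intervalIntegral.integral_const_mul]

set_option synthInstance.maxHeartbeats 1000000 in
lemma vanish_of_moments (v : ℝ → ℝ) (hv : ContinuousOn v (Set.Icc (-1) 1))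
    (hm : ∀ k : ℕ, ∫ x in (-1:ℝ)..1, v x * x^k = 0) : ∀ x ∈ Set.Icc (-1:ℝ) 1, v x = 0 := by
  have hm11 : (-1:ℝ) < 1 := by norm_num
  have hpoly : ∀ Q : ℝ[X], ∫ x in (-1:ℝ)..1, v x * Q.eval x = 0 := by
    intro Q
    rw [integral_mul_poly v hv Q]
    simp [hm]
  obtain ⟨M, hM⟩ := (isCompact_Icc : IsCompact (Set.Icc (-1:ℝ) 1)).exists_bound_of_continuousOn hv
  have hM0 : 0 ≤ M := le_trans (norm_nonneg _) (hM 0 (by norm_num))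
  have hVmem : (⟨Set.restrict _ v, hv.restrict⟩ : C(Set.Icc (-1:ℝ) 1, ℝ))
      ∈ (polynomialFunctions (Set.Icc (-1:ℝ) 1)).topologicalClosure := by
    rw [polynomialFunctions_closure_eq_top]
    trivial
  have hclosure : (⟨Set.restrict _ v, hv.restrict⟩ : C(Set.Icc (-1:ℝ) 1, ℝ))
      ∈ closure (polynomialFunctions (Set.Icc (-1:ℝ) 1) : Set C(Set.Icc (-1:ℝ) 1, ℝ)) := hVmem
  have hsq_le : ∀ ε : ℝ, 0 < ε → ∫ x in (-1:ℝ)..1, (v x)^2 ≤ ε := by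
    intro ε hε
    set δ : ℝ := ε / (2 * (M+1)) with hδdef
    have hδ0 : 0 < δ := by positivity
    rw [Metric.mem_closure_iff] at hclosure
    obtain ⟨p, hp, hdist⟩ := hclosure δ hδ0
    rw [polynomialFunctions_coe] at hp
    obtain ⟨Q, hQ⟩ := hp
    have hdist' : ∀ x : Set.Icc (-1:ℝ) 1, dist (v x) (p x) < δ := by
      haveI : Nonempty (Set.Icc (-1:ℝ) 1) := ⟨⟨0, by norm_num⟩⟩
      rw [ContinuousMap.dist_lt_iff hδ0] at hdist
      intro x
      exact hdist x
    have hest : ∀ x ∈ Set.uIoc (-1:ℝ) 1, ‖v x * (v x - Q.eval x)‖ ≤ M * δ := by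
      intro x hx
      have hxI : x ∈ Set.Icc (-1:ℝ) 1 := by
        rw [Set.uIoc_of_le hm11.le] at hx
        exact ⟨hx.1.le, hx.2⟩
      have h1 := hM x hxI
      have h2 := hdist' ⟨x, hxI⟩
      have hQx : p ⟨x, hxI⟩ = Q.eval x := by
        rw [← hQ]; rfl
      rw [hQx] at h2
      rw [Real.dist_eq] at h2
      rw [Real.norm_eq_abs, abs_mul]
      rw [Real.norm_eq_abs] at h1
      have h3 : |v x - Q.eval x| ≤ δ := le_of_lt h2
      exact mul_le_mul h1 h3 (abs_nonneg _) hM0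
    have hzero : ∫ x in (-1:ℝ)..1, v x * Q.eval x = 0 := hpoly Q
    have hintA : IntervalIntegrable (fun x => (v x)^2) volume (-1) 1 := by
      apply ContinuousOn.intervalIntegrable
      rw [Set.uIcc_of_le hm11.le]
      exact hv.pow 2
    have hint2 : IntervalIntegrable (fun x => v x * Q.eval x) volume (-1) 1 := by
      apply ContinuousOn.intervalIntegrable
      rw [Set.uIcc_of_le hm11.le]
      exact hv.mul (Polynomial.continuous Q).continuousOn
    have hrw : ∫ x in (-1:ℝ)..1, (v x)^2
        = ∫ x in (-1:ℝ)..1, v x * (v x - Q.eval x) := by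
      have hsubint : ∫ x in (-1:ℝ)..1, v x * (v x - Q.eval x)
          = (∫ x in (-1:ℝ)..1, (v x)^2) - ∫ x in (-1:ℝ)..1, v x * Q.eval x := by
        rw [← intervalIntegral.integral_sub hintA hint2]
        apply intervalIntegral.integral_congr
        intro x _
        show v x * (v x - Q.eval x) = (v x)^2 - v x * Q.eval x
        ring
      rw [hsubint, hzero, sub_zero]
    rw [hrw]
    have := intervalIntegral.norm_integral_le_of_norm_le_const hest
    rw [Real.norm_eq_abs] at this
    have habs := le_trans (le_abs_self _) this
    have : M * δ * |1 - (-1:ℝ)| = 2 * M * δ := by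
      rw [show |1 - (-1:ℝ)| = 2 by norm_num]; ring
    rw [this] at habs
    have hδε : δ * (2*(M+1)) = ε := by
      rw [hδdef]; field_simp
    have hfin : 2 * M * δ ≤ ε := by nlinarith [hδε, hδ0.le]
    linarith
  have hsq0 : ∫ x in (-1:ℝ)..1, (v x)^2 = 0 := by
    have h1 : 0 ≤ ∫ x in (-1:ℝ)..1, (v x)^2 :=
      intervalIntegral.integral_nonneg hm11.le (fun t _ => sq_nonneg _)
    by_contra h
    have h2 : 0 < ∫ x in (-1:ℝ)..1, (v x)^2 := lt_of_le_of_ne h1 (Ne.symm h)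
    linarith [hsq_le _ (half_pos h2)]
  intro x hx
  by_contra hne
  have := sq_integral_pos v hv x hx hne
  linarith


lemma moment_system (u u' u'' : ℝ → ℝ) (μ : ℝ)
    (hu : ContinuousOn u (Set.Icc (-1) 1))
    (hd1 : ∀ x ∈ Set.Ioo (-1:ℝ) 1, HasDerivAt u (u' x) x)
    (hd2 : ∀ x ∈ Set.Ioo (-1:ℝ) 1, HasDerivAt u' (u'' x) x)
    (hode : ∀ x ∈ Set.Ioo (-1:ℝ) 1, (1 - x^2) * u'' x - 2*x*u' x + μ * u x = 0) :
    (μ * ∫ x in (-1:ℝ)..1, u x * x^0) = 0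
    ∧ ((μ - 2) * ∫ x in (-1:ℝ)..1, u x * x^1) = 0
    ∧ ∀ k : ℕ, (((k:ℝ)+2)*((k:ℝ)+1)) * (∫ x in (-1:ℝ)..1, u x * x^k)
        + (μ - ((k:ℝ)+2)*((k:ℝ)+3)) * (∫ x in (-1:ℝ)..1, u x * x^(k+2)) = 0 := by
  have hm11 : (-1:ℝ) < 1 := by norm_num
  have hintk : ∀ (c : ℝ) (k : ℕ),
      IntervalIntegrable (fun x => c * (u x * x^k)) volume (-1) 1 := by
    intro c k
    apply ContinuousOn.intervalIntegrable
    rw [Set.uIcc_of_le hm11.le]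
    exact continuousOn_const.mul (hu.mul (continuousOn_pow k))
  refine ⟨?_, ?_, ?_⟩
  · have h := moment_rel u u' u'' μ hu hd1 hd2 hode (1:ℝ[X])
    rw [← h, ← intervalIntegral.integral_const_mul]
    apply intervalIntegral.integral_congr
    intro x _
    show μ * (u x * x^0) = u x * ((1 - x^2) * (Polynomial.derivative (Polynomial.derivative (1:ℝ[X]))).eval x
        - 2*x*(Polynomial.derivative (1:ℝ[X])).eval x + μ * (1:ℝ[X]).eval x)
    simp
    ring
  · have h := moment_rel u u' u'' μ hu hd1 hd2 hode (X:ℝ[X])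
    rw [← h, ← intervalIntegral.integral_const_mul]
    apply intervalIntegral.integral_congr
    intro x _
    show (μ - 2) * (u x * x^1) = u x * ((1 - x^2) * (Polynomial.derivative (Polynomial.derivative (X:ℝ[X]))).eval x
        - 2*x*(Polynomial.derivative (X:ℝ[X])).eval x + μ * (X:ℝ[X]).eval x)
    simp
    ring
  · intro k
    have h := moment_rel u u' u'' μ hu hd1 hd2 hode (X^(k+2):ℝ[X])
    have hd1' : Polynomial.derivative (X^(k+2):ℝ[X]) = Polynomial.C ((k:ℝ)+2) * X^(k+1) := by
      rw [Polynomial.derivative_X_pow]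
      norm_num
    have hd2' : Polynomial.derivative (Polynomial.derivative (X^(k+2):ℝ[X]))
        = Polynomial.C (((k:ℝ)+2)*((k:ℝ)+1)) * X^k := by
      rw [hd1', Polynomial.derivative_C_mul, Polynomial.derivative_X_pow]
      norm_num
      ring
    rw [← h, ← intervalIntegral.integral_const_mul, ← intervalIntegral.integral_const_mul,
      ← intervalIntegral.integral_add (hintk _ k) (hintk _ (k+2))]
    apply intervalIntegral.integral_congr
    intro x _
    show (((k:ℝ)+2)*((k:ℝ)+1)) * (u x * x^k) + (μ - ((k:ℝ)+2)*((k:ℝ)+3)) * (u x * x^(k+2))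
      = u x * ((1 - x^2) * (Polynomial.derivative (Polynomial.derivative (X^(k+2):ℝ[X]))).eval x
        - 2*x*(Polynomial.derivative (X^(k+2):ℝ[X])).eval x + μ * (X^(k+2):ℝ[X]).eval x)
    rw [hd2', hd1']
    simp only [Polynomial.eval_mul, Polynomial.eval_C, Polynomial.eval_pow, Polynomial.eval_X]
    ring

lemma moment_odd_zero (u : ℝ → ℝ)
    (heven : ∀ x ∈ Set.Icc (-1:ℝ) 1, u (-x) = u x) (j : ℕ) :
    ∫ x in (-1:ℝ)..1, u x * x^(2*j+1) = 0 := by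
  have h1 : ∫ x in (-1:ℝ)..1, u (-x) * (-x)^(2*j+1) = ∫ x in (-1:ℝ)..1, u x * x^(2*j+1) := by
    have := intervalIntegral.integral_comp_neg (a := (-1:ℝ)) (b := 1)
      (fun x => u x * x^(2*j+1))
    simpa using this
  have h2 : ∫ x in (-1:ℝ)..1, u (-x) * (-x)^(2*j+1)
      = ∫ x in (-1:ℝ)..1, -(u x * x^(2*j+1)) := by
    apply intervalIntegral.integral_congr
    intro x hx
    rw [Set.uIcc_of_le (by norm_num : (-1:ℝ) ≤ 1)] at hx
    show u (-x) * (-x)^(2*j+1) = -(u x * x^(2*j+1))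
    rw [heven x hx, Odd.neg_pow ⟨j, by ring⟩]
    ring
  rw [intervalIntegral.integral_neg] at h2
  linarith [h1, h2]

lemma kk1_inj (a b : ℕ) (h : (a:ℝ)*((a:ℝ)+1) = (b:ℝ)*((b:ℝ)+1)) : a = b := by
  by_contra hne
  have ha : (0:ℝ) ≤ a := Nat.cast_nonneg a
  have hb : (0:ℝ) ≤ b := Nat.cast_nonneg b
  rcases Nat.lt_or_ge a b with hlt | hge
  · have : (a:ℝ) < b := by exact_mod_cast hlt
    nlinarith
  · have hlt : b < a := by omega
    have : (b:ℝ) < a := by exact_mod_cast hlt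
    nlinarith

lemma seq_forced (μ : ℝ) (m : ℕ → ℝ)
    (h0 : μ * m 0 = 0) (hμ0 : μ ≠ 0)
    (hrec : ∀ k : ℕ, (((k:ℝ)+2)*((k:ℝ)+1)) * m k + (μ - ((k:ℝ)+2)*((k:ℝ)+3)) * m (k+2) = 0) :
    ∀ j : ℕ, (∀ i : ℕ, 1 ≤ i → i ≤ j → μ ≠ (2*(i:ℝ))*(2*(i:ℝ)+1)) → m (2*j) = 0 := by
  intro j
  induction j with
  | zero =>
    intro _
    have : m 0 = 0 := by
      rcases mul_eq_zero.mp h0 with h | h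
      · exact absurd h hμ0
      · exact h
    simpa using this
  | succ j ih =>
    intro hres
    have hmj : m (2*j) = 0 := ih (fun i h1 h2 => hres i h1 (by omega))
    have hr := hrec (2*j)
    rw [hmj] at hr
    have hB : μ - ((2*(j:ℝ))+2)*((2*(j:ℝ))+3) ≠ 0 := by
      intro hzero
      apply hres (j+1) (by omega) (by omega)
      push_cast
      nlinarith [hzero]
    have h2j : (2*(j+1) : ℕ) = 2*j + 2 := by omega
    rw [h2j]
    push_cast at hr
    rcases mul_eq_zero.mp (by linarith [hr] :
        (μ - ((2*(j:ℝ))+2)*((2*(j:ℝ))+3)) * m (2*j+2) = 0) with h | h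
    · exact absurd h hB
    · exact h

lemma even_forced_zero (μ : ℝ) (m : ℕ → ℝ) (l : ℕ)
    (hl : μ = (l:ℝ)*((l:ℝ)+1)) (hleven : ∃ n, l = 2*n)
    (hrec : ∀ k : ℕ, (((k:ℝ)+2)*((k:ℝ)+1)) * m k + (μ - ((k:ℝ)+2)*((k:ℝ)+3)) * m (k+2) = 0)
    (h0 : m 0 = 0) (hml : m l = 0) :
    ∀ j : ℕ, m (2*j) = 0 := by
  intro j
  induction j with
  | zero => simpa using h0
  | succ j ih =>
    by_cases hcase : l = 2*j + 2
    · have : (2*(j+1) : ℕ) = l := by omega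
      rw [this]; exact hml
    · have hr := hrec (2*j)
      rw [ih] at hr
      push_cast at hr
      have hB : μ - ((2*(j:ℝ))+2)*((2*(j:ℝ))+3) ≠ 0 := by
        intro hzero
        apply hcase
        have heq : ((2*j+2 : ℕ):ℝ)*(((2*j+2:ℕ):ℝ)+1) = (l:ℝ)*((l:ℝ)+1) := by
          push_cast
          nlinarith [hzero, hl]
        exact (kk1_inj (2*j+2) l heq).symm ▸ rfl
      have h2j : (2*(j+1) : ℕ) = 2*j + 2 := by omega
      rw [h2j]
      rcases mul_eq_zero.mp (by linarith [hr] :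
          (μ - ((2*(j:ℝ))+2)*((2*(j:ℝ))+3)) * m (2*j+2) = 0) with h | h
      · exact absurd h hB
      · exact h

lemma odd_forced_zero (μ : ℝ) (m : ℕ → ℝ) (l : ℕ)
    (hl : μ = (l:ℝ)*((l:ℝ)+1)) (hleven : ∃ n, l = 2*n ∧ 1 ≤ n)
    (hrec : ∀ k : ℕ, (((k:ℝ)+2)*((k:ℝ)+1)) * m k + (μ - ((k:ℝ)+2)*((k:ℝ)+3)) * m (k+2) = 0)
    (h1 : (μ - 2) * m 1 = 0) :
    ∀ j : ℕ, m (2*j+1) = 0 := by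
  obtain ⟨n, hn, hn1⟩ := hleven
  have hl2 : (2:ℝ) ≤ (l:ℝ) := by
    have : (2:ℕ) ≤ l := by omega
    exact_mod_cast this
  intro j
  induction j with
  | zero =>
    have hμ2 : μ - 2 ≠ 0 := by
      rw [hl]; nlinarith
    simpa using (mul_eq_zero.mp h1).resolve_left hμ2
  | succ j ih =>
    have hr := hrec (2*j+1)
    rw [ih] at hr
    push_cast at hr
    have hB : μ - ((2*(j:ℝ)+1)+2)*((2*(j:ℝ)+1)+3) ≠ 0 := by
      intro hzero
      have heq : ((2*j+3 : ℕ):ℝ)*(((2*j+3:ℕ):ℝ)+1) = (l:ℝ)*((l:ℝ)+1) := by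
        push_cast
        nlinarith [hzero, hl]
      have := kk1_inj (2*j+3) l heq
      omega
    have h2j : (2*(j+1)+1 : ℕ) = (2*j+1) + 2 := by omega
    rw [h2j]
    rcases mul_eq_zero.mp (by linarith [hr] :
        (μ - ((2*(j:ℝ)+1)+2)*((2*(j:ℝ)+1)+3)) * m ((2*j+1)+2) = 0) with h | h
    · exact absurd h hB
    · exact h

lemma integral_one_div_sqrt_one_sub_sq : ∫ y in (-1:ℝ)..1, 1 / Real.sqrt (1 - y^2) = π := by
  have hm11 : (-1:ℝ) ≤ 1 := by norm_num
  have hcont : ContinuousOn Real.arcsin (Set.Icc (-1:ℝ) 1) :=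
    Real.continuous_arcsin.continuousOn
  have hderiv : ∀ x ∈ Set.Ioo (-1:ℝ) 1,
      HasDerivAt Real.arcsin (1 / Real.sqrt (1 - x^2)) x := by
    intro x hx
    exact Real.hasDerivAt_arcsin (ne_of_gt hx.1) (ne_of_lt hx.2)
  have hint : IntervalIntegrable (fun y => 1 / Real.sqrt (1 - y^2)) volume (-1) 1 := by
    apply intervalIntegral.intervalIntegrable_deriv_of_nonneg
      (g := Real.arcsin)
    · rw [Set.uIcc_of_le hm11]; exact hcont
    · intro x hx
      rw [min_eq_left hm11, max_eq_right hm11] at hx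
      exact hderiv x hx
    · intro x hx
      positivity
  have := intervalIntegral.integral_eq_sub_of_hasDeriv_right_of_le hm11 hcont
    (fun x hx => (hderiv x hx).hasDerivWithinAt) hint
  rw [Real.arcsin_one, Real.arcsin_neg_one] at this
  rw [this]
  ring

/-- Classification of the even continuous solutions of the nonlocal Legendre-type equation
`(1 − x²)b'' − 2x b' − α b = λ := (κ/π)∫_{−1}^{1} b(y)/√(1 − y²) dy` with `κ > 2`,
`α ≠ 0`: a not-identically-zero solution is either a nonzero constant with `α = −κ`,
or of the form `B·P_{2n} − λ/α` with `B ≠ 0`, `n ≥ 1`, `α = −2n(2n+1)`.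
In particular `α ≤ −min(κ, 6) < −2`. -/
theorem nonlocal_legendre_classification (κ α : ℝ) (hκ : 2 < κ) (hα : α ≠ 0)
    (b : ℝ → ℝ)
    (hcont : ContinuousOn b (Set.Icc (-1) 1))
    (heven : ∀ x ∈ Set.Icc (-1:ℝ) 1, b (-x) = b x)
    (hC2 : ContDiffOn ℝ 2 b (Set.Ioo (-1) 1))
    (hne : ¬ ∀ x ∈ Set.Icc (-1:ℝ) 1, b x = 0)
    (lam : ℝ) (hlam : lam = (κ/π) * ∫ y in (-1:ℝ)..1, b y / Real.sqrt (1 - y^2))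
    (heq : ∀ x ∈ Set.Ioo (-1:ℝ) 1,
      (1 - x^2) * deriv (deriv b) x - 2 * x * deriv b x - α * b x = lam) :
    (((∃ c : ℝ, c ≠ 0 ∧ ∀ x ∈ Set.Icc (-1:ℝ) 1, b x = c) ∧ α = -κ) ∨
      (∃ n : ℕ, 0 < n ∧ ∃ B : ℝ, B ≠ 0 ∧ α = -(2*(n:ℝ)) * (2*(n:ℝ) + 1) ∧
        ∀ x ∈ Set.Icc (-1:ℝ) 1, b x = B * (legendre (2*n)).eval x - lam/α)) ∧
    α ≤ -min κ 6 ∧ -min κ 6 < -2 := by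
  have hm11 : (-1:ℝ) < 1 := by norm_num
  have hbound : -min κ 6 < -2 := by
    have : (2:ℝ) < min κ 6 := lt_min hκ (by norm_num)
    linarith
  have hb1 : ∀ x ∈ Set.Ioo (-1:ℝ) 1, HasDerivAt b (deriv b x) x := by
    intro x hx
    have hdiff : DifferentiableOn ℝ b (Set.Ioo (-1:ℝ) 1) := hC2.differentiableOn two_ne_zero
    exact (hdiff.differentiableAt (isOpen_Ioo.mem_nhds hx)).hasDerivAt
  have hb2 : ∀ x ∈ Set.Ioo (-1:ℝ) 1, HasDerivAt (deriv b) (deriv (deriv b) x) x := by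
    intro x hx
    have h1 : ContDiffOn ℝ 1 (deriv b) (Set.Ioo (-1:ℝ) 1) :=
      hC2.deriv_of_isOpen isOpen_Ioo (by norm_num)
    exact ((h1.differentiableOn one_ne_zero).differentiableAt (isOpen_Ioo.mem_nhds hx)).hasDerivAt
  by_cases hu0 : ∀ x ∈ Set.Icc (-1:ℝ) 1, b x = -(lam/α)
  · -- constant case
    set c : ℝ := -(lam/α) with hcdef
    have hc0 : c ≠ 0 := by
      intro h
      apply hne
      intro x hx
      rw [hu0 x hx, h]
    have h0I : (0:ℝ) ∈ Set.Ioo (-1:ℝ) 1 := by norm_num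
    have hder0 : ∀ x ∈ Set.Ioo (-1:ℝ) 1, deriv b x = 0 := by
      intro x hx
      have hev : b =ᶠ[nhds x] (fun _ => c) := by
        filter_upwards [isOpen_Ioo.mem_nhds hx] with y hy
        exact hu0 y (Set.Ioo_subset_Icc_self hy)
      rw [hev.deriv_eq]
      exact deriv_const x c
    have hder20 : deriv (deriv b) 0 = 0 := by
      have hev : deriv b =ᶠ[nhds (0:ℝ)] (fun _ => 0) := by
        filter_upwards [isOpen_Ioo.mem_nhds h0I] with y hy
        exact hder0 y hy
      rw [hev.deriv_eq]
      exact deriv_const 0 0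
    have heq0 := heq 0 h0I
    rw [hder20, hder0 0 h0I, hu0 0 (by norm_num)] at heq0
    have hlam1 : -(α*c) = lam := by
      norm_num at heq0
      linarith [heq0]
    have hbint : ∫ y in (-1:ℝ)..1, b y / Real.sqrt (1-y^2) = c * π := by
      have h1 : ∫ y in (-1:ℝ)..1, b y / Real.sqrt (1-y^2)
          = ∫ y in (-1:ℝ)..1, c * (1 / Real.sqrt (1-y^2)) := by
        apply intervalIntegral.integral_congr
        intro y hy
        rw [Set.uIcc_of_le hm11.le] at hy
        show b y / Real.sqrt (1-y^2) = c * (1 / Real.sqrt (1-y^2))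
        rw [hu0 y hy]
        ring
      rw [h1, intervalIntegral.integral_const_mul, integral_one_div_sqrt_one_sub_sq]
    have hlam2 : lam = κ * c := by
      rw [hlam, hbint]
      field_simp
    have hακ : α = -κ := by
      have h3 : -(α*c) = κ*c := by rw [hlam1, hlam2]
      have h4 : (-α - κ) * c = 0 := by linear_combination h3
      rcases mul_eq_zero.mp h4 with h | h
      · linarith
      · exact absurd h hc0
    refine ⟨Or.inl ⟨⟨c, hc0, hu0⟩, hακ⟩, ?_, hbound⟩
    rw [hακ]
    have := min_le_left κ 6
    linarith
  · -- non-constant case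
    set μ : ℝ := -α with hμdef
    have hμ0 : μ ≠ 0 := neg_ne_zero.mpr hα
    set u : ℝ → ℝ := fun x => b x + lam/α with hudef
    have hu0' : ¬ ∀ x ∈ Set.Icc (-1:ℝ) 1, u x = 0 := by
      intro h
      apply hu0
      intro x hx
      have := h x hx
      simp only [hudef] at this
      linarith [this]
    have hucont : ContinuousOn u (Set.Icc (-1:ℝ) 1) := hcont.add continuousOn_const
    have hueven : ∀ x ∈ Set.Icc (-1:ℝ) 1, u (-x) = u x := by
      intro x hx
      simp only [hudef]
      rw [heven x hx]
    have hud1 : ∀ x ∈ Set.Ioo (-1:ℝ) 1, HasDerivAt u (deriv b x) x :=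
      fun x hx => (hb1 x hx).add_const _
    have hαlam : α * (lam/α) = lam := mul_div_cancel₀ lam hα
    have huode : ∀ x ∈ Set.Ioo (-1:ℝ) 1,
        (1-x^2) * deriv (deriv b) x - 2*x*deriv b x + μ * u x = 0 := by
      intro x hx
      have h := heq x hx
      simp only [hudef, hμdef]
      have : -α * (b x + lam/α) = -α * b x - lam := by
        rw [mul_add]
        rw [show -α * (lam/α) = -(α * (lam/α)) by ring, hαlam]
        ring
      rw [this]
      linarith [h]
    obtain ⟨hmom0, hmom1, hmrec⟩ :=
      moment_system u (deriv b) (deriv (deriv b)) μ hucont hud1 hb2 huode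
    set m : ℕ → ℝ := fun k => ∫ x in (-1:ℝ)..1, u x * x^k with hmdef
    have hmodd : ∀ j, m (2*j+1) = 0 := fun j => moment_odd_zero u hueven j
    have hm00 : m 0 = 0 := by
      rcases mul_eq_zero.mp hmom0 with h | h
      · exact absurd h hμ0
      · exact h
    have hex : ∃ K, m K ≠ 0 := by
      by_contra h
      push_neg at h
      exact hu0' (vanish_of_moments u hucont h)
    obtain ⟨K, hK⟩ := hex
    have hresonance : ∃ n : ℕ, 1 ≤ n ∧ μ = (2*(n:ℝ))*(2*(n:ℝ)+1) := by
      by_contra h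
      push_neg at h
      have hall : ∀ j, m (2*j) = 0 :=
        fun j => seq_forced μ m hmom0 hμ0 hmrec j (fun i h1 _ => h i h1)
      apply hK
      rcases Nat.even_or_odd K with ⟨j, hj⟩ | ⟨j, hj⟩
      · have hk2 : K = 2*j := by omega
        rw [hk2]
        exact hall j
      · have hk2 : K = 2*j+1 := by omega
        rw [hk2]
        exact hmodd j
    obtain ⟨n, hn1, hμn⟩ := hresonance
    set l : ℕ := 2*n with hldef
    have hμl : μ = (l:ℝ)*((l:ℝ)+1) := by
      rw [hldef]
      push_cast
      linarith [hμn]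
    set P : Polynomial ℝ := legendre l with hPdef
    have hPcont : ContinuousOn (fun x => P.eval x) (Set.Icc (-1:ℝ) 1) :=
      (Polynomial.continuous P).continuousOn
    obtain ⟨hp0, hp1, hprec⟩ := moment_system (fun x => P.eval x)
      (fun x => (Polynomial.derivative P).eval x)
      (fun x => (Polynomial.derivative (Polynomial.derivative P)).eval x) μ
      hPcont (fun x _ => Polynomial.hasDerivAt P x)
      (fun x _ => Polynomial.hasDerivAt (Polynomial.derivative P) x)
      (fun x _ => by
        have h := legendre_ode_eval l x
        rw [hμl, hPdef]
        linarith [h])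
    set p : ℕ → ℝ := fun k => ∫ x in (-1:ℝ)..1, P.eval x * x^k with hpdef
    have hp00 : p 0 = 0 := by
      rcases mul_eq_zero.mp hp0 with h | h
      · exact absurd h hμ0
      · exact h
    have hpodd : ∀ j, p (2*j+1) = 0 :=
      odd_forced_zero μ p l hμl ⟨n, rfl, hn1⟩ hprec hp1
    have hplow : ∀ j, 2*j < l → p (2*j) = 0 := by
      intro j hj
      apply seq_forced μ p hp0 hμ0 hprec
      intro i h1 h2 hcon
      have heq2 : ((2*i : ℕ):ℝ)*(((2*i:ℕ):ℝ)+1) = (l:ℝ)*((l:ℝ)+1) := by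
        push_cast
        nlinarith [hcon, hμl]
      have := kk1_inj (2*i) l heq2
      omega
    have hPne : P ≠ 0 := legendre_ne_zero l
    obtain ⟨x₀, hx₀mem, hx₀ne⟩ : ∃ x₀ ∈ Set.Icc (-1:ℝ) 1, P.eval x₀ ≠ 0 := by
      obtain ⟨x₀, hmem, hnot⟩ :=
        (Set.Icc_infinite hm11).exists_notMem_finset P.roots.toFinset
      refine ⟨x₀, hmem, fun h => hnot ?_⟩
      rw [Multiset.mem_toFinset, Polynomial.mem_roots hPne]
      exact h
    have hsqpos : 0 < ∫ x in (-1:ℝ)..1, (P.eval x)^2 :=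
      sq_integral_pos _ hPcont x₀ hx₀mem hx₀ne
    have hexpand : ∫ x in (-1:ℝ)..1, (P.eval x)^2 = P.coeff l * p l := by
      have h1 : ∫ x in (-1:ℝ)..1, (P.eval x)^2
          = ∫ x in (-1:ℝ)..1, P.eval x * P.eval x := by
        apply intervalIntegral.integral_congr
        intro x _
        show (P.eval x)^2 = P.eval x * P.eval x
        ring
      rw [h1, integral_mul_poly _ hPcont P]
      have hdeg : P.natDegree = l := legendre_natDegree l
      rw [hdeg]
      rw [Finset.sum_eq_single l]
      · intro k hk hkne
        have hkl : k < l := by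
          have := Finset.mem_range.mp hk
          omega
        have hpk : p k = 0 := by
          rcases Nat.even_or_odd k with ⟨j, hj⟩ | ⟨j, hj⟩
          · have hk2 : k = 2*j := by omega
            rw [hk2]
            exact hplow j (by omega)
          · have hk2 : k = 2*j+1 := by omega
            rw [hk2]
            exact hpodd j
        show P.coeff k * p k = 0
        rw [hpk, mul_zero]
      · intro hnotmem
        exact absurd (Finset.self_mem_range_succ l) hnotmem
    have hpl : p l ≠ 0 := by
      intro h
      rw [hexpand, h, mul_zero] at hsqpos
      exact lt_irrefl 0 hsqpos
    set C₀ : ℝ := m l / p l with hCdef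
    have hqall : ∀ k, p l * m k - m l * p k = 0 := by
      have hqrec : ∀ k : ℕ, (((k:ℝ)+2)*((k:ℝ)+1)) * (p l * m k - m l * p k)
          + (μ - ((k:ℝ)+2)*((k:ℝ)+3)) * (p l * m (k+2) - m l * p (k+2)) = 0 := by
        intro k
        have h1 := hmrec k
        have h2 := hprec k
        linear_combination (p l) * h1 - (m l) * h2
      have hq0 : p l * m 0 - m l * p 0 = 0 := by rw [hm00, hp00]; ring
      have hql : p l * m l - m l * p l = 0 := by ring
      have hqe : ∀ j, p l * m (2*j) - m l * p (2*j) = 0 :=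
        even_forced_zero μ (fun k => p l * m k - m l * p k) l hμl ⟨n, rfl⟩ hqrec hq0 hql
      have hqo : ∀ j, p l * m (2*j+1) - m l * p (2*j+1) = 0 := by
        intro j
        rw [hmodd j, hpodd j]
        ring
      intro k
      rcases Nat.even_or_odd k with ⟨j, hj⟩ | ⟨j, hj⟩
      · have hk2 : k = 2*j := by omega
        rw [hk2]
        exact hqe j
      · have hk2 : k = 2*j+1 := by omega
        rw [hk2]
        exact hqo j
    have hmk : ∀ k, m k = C₀ * p k := by
      intro k
      have h := hqall k
      rw [hCdef]
      field_simp
      linarith [h]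
    have hintu : ∀ k : ℕ, IntervalIntegrable (fun x => u x * x^k) volume (-1) 1 := by
      intro k
      apply ContinuousOn.intervalIntegrable
      rw [Set.uIcc_of_le hm11.le]
      exact hucont.mul (continuousOn_pow k)
    have hintP : ∀ k : ℕ, IntervalIntegrable (fun x => C₀ * (P.eval x * x^k)) volume (-1) 1 := by
      intro k
      apply ContinuousOn.intervalIntegrable
      rw [Set.uIcc_of_le hm11.le]
      exact continuousOn_const.mul (hPcont.mul (continuousOn_pow k))
    have hvanish : ∀ x ∈ Set.Icc (-1:ℝ) 1, u x - C₀ * P.eval x = 0 := by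
      apply vanish_of_moments (fun x => u x - C₀ * P.eval x) (hucont.sub (continuousOn_const.mul hPcont))
      intro k
      show ∫ x in (-1:ℝ)..1, (u x - C₀ * P.eval x) * x^k = 0
      have hsplit : ∫ x in (-1:ℝ)..1, (u x - C₀ * P.eval x) * x^k
          = (∫ x in (-1:ℝ)..1, u x * x^k) - ∫ x in (-1:ℝ)..1, C₀ * (P.eval x * x^k) := by
        rw [← intervalIntegral.integral_sub (hintu k) (hintP k)]
        apply intervalIntegral.integral_congr
        intro x _
        show (u x - C₀ * P.eval x) * x^k = u x * x^k - C₀ * (P.eval x * x^k)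
        ring
      rw [hsplit, intervalIntegral.integral_const_mul]
      have := hmk k
      simp only [hmdef, hpdef] at this
      linarith [this]
    have hC0 : C₀ ≠ 0 := by
      intro h
      apply hu0'
      intro x hx
      have := hvanish x hx
      rw [h, zero_mul, sub_zero] at this
      exact this
    have hαval : α = -(2*(n:ℝ)) * (2*(n:ℝ) + 1) := by
      have : μ = (2*(n:ℝ))*(2*(n:ℝ)+1) := hμn
      rw [hμdef] at this
      linarith [this]
    refine ⟨Or.inr ⟨n, by omega, C₀, hC0, hαval, ?_⟩, ?_, hbound⟩
    · intro x hx
      have h1 := hvanish x hx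
      have h2 : u x = b x + lam/α := rfl
      rw [h2] at h1
      have : b x = C₀ * P.eval x - lam/α := by linarith [h1]
      rw [this, hPdef, hldef]
    · have hn1' : (1:ℝ) ≤ (n:ℝ) := by exact_mod_cast hn1
      have h6 : min κ 6 ≤ 6 := min_le_right _ _
      nlinarith [hαval, hn1', h6]
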